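/- Let E_n denote the number of alternating permutations of {1,…,n}, i.e., permutations σ with σ(1) < σ(2) > σ(3) < σ(4) > ⋯. Then lim_{n→∞} (E_n / n!)^{1/n} = 2/π. -/

import Mathlib

open Filter MeasureTheory Set Real Equiv ENNReal intervalIntegral

noncomputable section

def hfun : Bool → ℝ → ℝ
  | true, t => Real.cos (π / 2 * t)
  | false, t => Real.sin (π / 2 * t)

lemma hfun_true (t : ℝ) : hfun true t = Real.cos (π / 2 * t) := rfl
lemma hfun_false (t : ℝ) : hfun false t = Real.sin (π / 2 * t) := rfl

def zz : ℕ → Bool → ℝ → ℝ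
  | 0, _, _ => 1
  | n+1, true, t => ∫ s in t..1, zz n false s
  | n+1, false, t => ∫ s in (0:ℝ)..t, zz n true s

lemma zz_succ_true (n : ℕ) (t : ℝ) : zz (n+1) true t = ∫ s in t..1, zz n false s := rfl
lemma zz_succ_false (n : ℕ) (t : ℝ) : zz (n+1) false t = ∫ s in (0:ℝ)..t, zz n true s := rfl

lemma continuous_zz (n : ℕ) (b : Bool) : Continuous (zz n b) := by
  induction n generalizing b with
  | zero => cases b <;> exact continuous_const
  | succ n ih =>
    cases b
    · exact intervalIntegral.continuous_primitive
        (fun a b => ((ih true).intervalIntegrable a b)) 0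
    · have h : Continuous fun t : ℝ => ∫ s in (0:ℝ)..t, zz n false s :=
        intervalIntegral.continuous_primitive
          (fun a b => ((ih false).intervalIntegrable a b)) 0
      have heq : (fun t : ℝ => ∫ s in t..1, zz n false s)
          = fun t => (∫ s in (0:ℝ)..(1:ℝ), zz n false s) - ∫ s in (0:ℝ)..t, zz n false s := by
        funext t
        rw [eq_sub_iff_add_eq, add_comm]
        exact intervalIntegral.integral_add_adjacent_intervals
          (((ih false)).intervalIntegrable 0 t) (((ih false)).intervalIntegrable t 1)
      show Continuous fun t : ℝ => ∫ s in t..1, zz n false s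
      rw [heq]
      exact continuous_const.sub h

lemma zz_nonneg (n : ℕ) (b : Bool) {t : ℝ} (h0 : 0 ≤ t) (h1 : t ≤ 1) : 0 ≤ zz n b t := by
  induction n generalizing b t with
  | zero => cases b <;> exact zero_le_one
  | succ n ih =>
    cases b
    · rw [zz_succ_false]
      refine intervalIntegral.integral_nonneg h0 fun s hs => ih true hs.1 (hs.2.trans h1)
    · rw [zz_succ_true]
      refine intervalIntegral.integral_nonneg h1 fun s hs => ih false (h0.trans hs.1) hs.2

-- eigen-computations
lemma integral_hfun_false (t : ℝ) :
    (∫ s in t..1, hfun false s) = 2 / π * hfun true t := by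
  simp only [hfun_true, hfun_false]
  rw [intervalIntegral.integral_comp_mul_left (fun x => Real.sin x) (by positivity : π/2 ≠ 0)]
  rw [integral_sin]
  simp [Real.cos_pi_div_two, smul_eq_mul]

lemma integral_hfun_true (t : ℝ) :
    (∫ s in (0:ℝ)..t, hfun true s) = 2 / π * hfun false t := by
  simp only [hfun_true, hfun_false]
  rw [intervalIntegral.integral_comp_mul_left (fun x => Real.cos x) (by positivity : π/2 ≠ 0)]
  rw [integral_cos]
  simp [smul_eq_mul]

end
noncomputable section

lemma continuous_hfun (b : Bool) : Continuous (hfun b) := by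
  cases b
  · exact Real.continuous_sin.comp (continuous_const.mul continuous_id)
  · exact Real.continuous_cos.comp (continuous_const.mul continuous_id)

lemma zz_one_true {t : ℝ} : zz 1 true t = 1 - t := by
  rw [zz_succ_true]; simp [zz]

lemma zz_one_false {t : ℝ} : zz 1 false t = t := by
  rw [zz_succ_false]; simp [zz]

lemma base_le {b : Bool} {t : ℝ} (h0 : 0 ≤ t) (h1 : t ≤ 1) :
    zz 1 b t ≤ hfun b t := by
  cases b
  · rw [zz_one_false, hfun_false]
    simpa [mul_comm] using Real.le_sin_mul h0 h1
  · rw [zz_one_true, hfun_true]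
    have : π / 2 * t = π / 2 - π / 2 * (1 - t) := by ring
    rw [this, Real.cos_pi_div_two_sub]
    simpa [mul_comm] using Real.le_sin_mul (by linarith : (0:ℝ) ≤ 1 - t) (by linarith)

lemma base_ge {b : Bool} {t : ℝ} (h0 : 0 ≤ t) (h1 : t ≤ 1) :
    2 / π * hfun b t ≤ zz 1 b t := by
  have hπ : (0:ℝ) < π := Real.pi_pos
  cases b
  · rw [zz_one_false, hfun_false]
    have h := Real.sin_le (by positivity : 0 ≤ π / 2 * t)
    have h2 : 0 ≤ 2 / π := by positivity
    calc 2 / π * Real.sin (π / 2 * t) ≤ 2 / π * (π / 2 * t) := by nlinarith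
    _ = t := by field_simp
  · rw [zz_one_true, hfun_true]
    have : π / 2 * t = π / 2 - π / 2 * (1 - t) := by ring
    rw [this, Real.cos_pi_div_two_sub]
    have h := Real.sin_le (by nlinarith : 0 ≤ π / 2 * (1 - t))
    have h2 : 0 ≤ 2 / π := by positivity
    calc 2 / π * Real.sin (π / 2 * (1 - t)) ≤ 2 / π * (π / 2 * (1 - t)) := by nlinarith
    _ = 1 - t := by field_simp

lemma zz_bounds (n : ℕ) (b : Bool) {t : ℝ} (h0 : 0 ≤ t) (h1 : t ≤ 1) :
    (2/π)^(n+1) * hfun b t ≤ zz (n+1) b t ∧ zz (n+1) b t ≤ (2/π)^n * hfun b t := by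
  have hπ : (0:ℝ) < π := Real.pi_pos
  induction n generalizing b t with
  | zero =>
    refine ⟨?_, by simpa using base_le h0 h1⟩
    simpa using base_ge h0 h1
  | succ n ih =>
    cases b
    · rw [zz_succ_false]
      constructor
      · have hmono : (∫ s in (0:ℝ)..t, (2/π)^(n+1) * hfun true s) ≤
            ∫ s in (0:ℝ)..t, zz (n+1) true s := by
          refine intervalIntegral.integral_mono_on h0
            ((continuous_const.mul (continuous_hfun true)).intervalIntegrable 0 t)
            ((continuous_zz (n+1) true).intervalIntegrable 0 t)
            (fun s hs => (ih true hs.1 (hs.2.trans h1)).1)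
        calc (2/π)^(n+1+1) * hfun false t
            = (2/π)^(n+1) * (2/π * hfun false t) := by ring
          _ = ∫ s in (0:ℝ)..t, (2/π)^(n+1) * hfun true s := by
              rw [intervalIntegral.integral_const_mul, integral_hfun_true]
          _ ≤ _ := hmono
      · have hmono : (∫ s in (0:ℝ)..t, zz (n+1) true s) ≤
            ∫ s in (0:ℝ)..t, (2/π)^n * hfun true s := by
          refine intervalIntegral.integral_mono_on h0
            ((continuous_zz (n+1) true).intervalIntegrable 0 t)
            ((continuous_const.mul (continuous_hfun true)).intervalIntegrable 0 t)
            (fun s hs => (ih true hs.1 (hs.2.trans h1)).2)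
        calc (∫ s in (0:ℝ)..t, zz (n+1) true s)
            ≤ ∫ s in (0:ℝ)..t, (2/π)^n * hfun true s := hmono
          _ = (2/π)^(n+1) * hfun false t := by
              rw [intervalIntegral.integral_const_mul, integral_hfun_true]; ring
    · rw [zz_succ_true]
      constructor
      · have hmono : (∫ s in t..1, (2/π)^(n+1) * hfun false s) ≤
            ∫ s in t..1, zz (n+1) false s := by
          refine intervalIntegral.integral_mono_on h1
            ((continuous_const.mul (continuous_hfun false)).intervalIntegrable t 1)
            ((continuous_zz (n+1) false).intervalIntegrable t 1)
            (fun s hs => (ih false (h0.trans hs.1) hs.2).1)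
        calc (2/π)^(n+1+1) * hfun true t
            = (2/π)^(n+1) * (2/π * hfun true t) := by ring
          _ = ∫ s in t..1, (2/π)^(n+1) * hfun false s := by
              rw [intervalIntegral.integral_const_mul, integral_hfun_false]
          _ ≤ _ := hmono
      · have hmono : (∫ s in t..1, zz (n+1) false s) ≤
            ∫ s in t..1, (2/π)^n * hfun false s := by
          refine intervalIntegral.integral_mono_on h1
            ((continuous_zz (n+1) false).intervalIntegrable t 1)
            ((continuous_const.mul (continuous_hfun false)).intervalIntegrable t 1)
            (fun s hs => (ih false (h0.trans hs.1) hs.2).2)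
        calc (∫ s in t..1, zz (n+1) false s)
            ≤ ∫ s in t..1, (2/π)^n * hfun false s := hmono
          _ = (2/π)^(n+1) * hfun true t := by
              rw [intervalIntegral.integral_const_mul, integral_hfun_false]; ring

lemma zz_zero_bounds (n : ℕ) :
    (2/π)^(n+1) ≤ zz (n+1) true 0 ∧ zz (n+1) true 0 ≤ (2/π)^n := by
  have h := zz_bounds n true (le_refl (0:ℝ)) zero_le_one
  have : hfun true 0 = 1 := by simp [hfun_true]
  rw [this, mul_one, mul_one] at h
  exact h

end

noncomputable section

def Reg : (n : ℕ) → Bool → ℝ → Set (Fin n → ℝ)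
  | 0, _, _ => Set.univ
  | n+1, b, t => {x | x 0 ∈ Set.Icc (0:ℝ) 1 ∧ (if b then t < x 0 else x 0 < t) ∧
      (fun j : Fin n => x j.succ) ∈ Reg n (!b) (x 0)}

def Reg2 (n : ℕ) (b : Bool) : Set (ℝ × (Fin n → ℝ)) := {p | p.2 ∈ Reg n b p.1}

lemma measurableSet_Reg2 (n : ℕ) (b : Bool) : MeasurableSet (Reg2 n b) := by
  induction n generalizing b with
  | zero => simp [Reg2, Reg]
  | succ n ih =>
    have h1 : MeasurableSet {p : ℝ × (Fin (n+1) → ℝ) | p.2 0 ∈ Set.Icc (0:ℝ) 1} :=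
      (measurable_snd.eval (a := (0 : Fin (n+1)))) measurableSet_Icc
    have hmap : Measurable fun p : ℝ × (Fin (n+1) → ℝ) =>
        ((p.2 0, fun j : Fin n => p.2 j.succ) : ℝ × (Fin n → ℝ)) :=
      (measurable_snd.eval).prodMk
        (measurable_pi_iff.2 fun j => measurable_snd.eval)
    have h3 : MeasurableSet {p : ℝ × (Fin (n+1) → ℝ) |
        (fun j : Fin n => p.2 j.succ) ∈ Reg n (!b) (p.2 0)} := hmap (ih (!b))
    cases b
    · have h2 : MeasurableSet {p : ℝ × (Fin (n+1) → ℝ) | p.2 0 < p.1} :=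
        measurableSet_lt (measurable_snd.eval) measurable_fst
      have : Reg2 (n+1) false = _ ∩ (_ ∩ _) := rfl
      exact (h1.inter (h2.inter h3))
    · have h2 : MeasurableSet {p : ℝ × (Fin (n+1) → ℝ) | p.1 < p.2 0} :=
        measurableSet_lt measurable_fst (measurable_snd.eval)
      exact (h1.inter (h2.inter h3))

lemma measurableSet_Reg (n : ℕ) (b : Bool) (t : ℝ) : MeasurableSet (Reg n b t) := by
  have : Reg n b t = Prod.mk t ⁻¹' Reg2 n b := rfl
  rw [this]
  exact (measurable_prodMk_left) (measurableSet_Reg2 n b)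

end
noncomputable section

lemma volume_Reg (n : ℕ) (b : Bool) {t : ℝ} (h0 : 0 ≤ t) (h1 : t ≤ 1) :
    volume (Reg n b t) = ENNReal.ofReal (zz n b t) := by
  induction n generalizing b t with
  | zero =>
    simp only [Reg, zz, ENNReal.ofReal_one]
    rw [volume_pi, Measure.pi_univ]
    simp
  | succ n ih =>
    -- the splitting equivalence
    set e := MeasurableEquiv.piFinSuccAbove (fun _ : Fin (n+1) => ℝ) 0 with he
    have hmp : MeasurePreserving e volume volume :=
      volume_preserving_piFinSuccAbove (fun _ : Fin (n+1) => ℝ) 0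
    set S : Set (ℝ × (Fin n → ℝ)) :=
      {p | p.1 ∈ Set.Icc (0:ℝ) 1 ∧ (if b then t < p.1 else p.1 < t) ∧ p.2 ∈ Reg n (!b) p.1}
      with hS
    have hSm : MeasurableSet S := by
      have h1' : MeasurableSet {p : ℝ × (Fin n → ℝ) | p.1 ∈ Set.Icc (0:ℝ) 1} :=
        measurable_fst measurableSet_Icc
      have h3' : MeasurableSet {p : ℝ × (Fin n → ℝ) | p.2 ∈ Reg n (!b) p.1} :=
        measurableSet_Reg2 n (!b)
      cases b
      · exact h1'.inter ((measurableSet_lt measurable_fst measurable_const).inter h3')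
      · exact h1'.inter ((measurableSet_lt measurable_const measurable_fst).inter h3')
    have hpre : Reg (n+1) b t = e ⁻¹' S := by
      ext x
      simp only [Reg, Set.mem_setOf_eq, Set.mem_preimage, hS, he,
        MeasurableEquiv.piFinSuccAbove_apply, Fin.succAbove_zero]
      rfl
    rw [hpre, hmp.measure_preimage hSm.nullMeasurableSet]
    rw [show (volume : Measure (ℝ × (Fin n → ℝ))) = (volume : Measure ℝ).prod volume from rfl]
    rw [Measure.prod_apply hSm]
    cases b
    · -- b = false
      have hslice : ∀ s : ℝ, Prod.mk s ⁻¹' S =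
          if s ∈ Set.Ico 0 t then Reg n (!false) s else ∅ := by
        intro s
        by_cases hs : s ∈ Set.Ico 0 t
        · rw [if_pos hs]; ext y
          simp only [hS, Set.mem_preimage, Set.mem_setOf_eq, Bool.false_eq_true, if_false]
          exact ⟨fun h => h.2.2, fun h => ⟨⟨hs.1, hs.2.le.trans h1⟩, hs.2, h⟩⟩
        · rw [if_neg hs]; ext y
          simp only [hS, Set.mem_preimage, Set.mem_setOf_eq, Bool.false_eq_true, if_false,
            Set.mem_empty_iff_false, iff_false]
          rintro ⟨hIcc, hlt, -⟩
          exact hs ⟨hIcc.1, hlt⟩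
      calc (∫⁻ s, volume (Prod.mk s ⁻¹' S))
          = ∫⁻ s, (Set.Ico 0 t).indicator (fun s => volume (Reg n (!false) s)) s := by
            refine lintegral_congr fun s => ?_
            rw [hslice s, Set.indicator_apply]
            split_ifs with h
            · rfl
            · exact measure_empty
        _ = ∫⁻ s in Set.Ico 0 t, volume (Reg n (!false) s) :=
            lintegral_indicator measurableSet_Ico _
        _ = ∫⁻ s in Set.Ico 0 t, ENNReal.ofReal (zz n (!false) s) := by
            refine setLIntegral_congr_fun measurableSet_Ico
              (fun s hs => ih _ hs.1 (hs.2.le.trans h1))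
        _ = ∫⁻ s in Set.Ioc 0 t, ENNReal.ofReal (zz n (!false) s) := by
            rw [Measure.restrict_congr_set Ico_ae_eq_Ioc]
        _ = ENNReal.ofReal (∫ s in Set.Ioc 0 t, zz n (!false) s) := by
            rw [← ofReal_integral_eq_lintegral_ofReal]
            · exact ((continuous_zz n (!false)).integrableOn_Icc).mono_set
                Set.Ioc_subset_Icc_self
            · exact (ae_restrict_iff' measurableSet_Ioc).2
                (Filter.Eventually.of_forall fun s hs => zz_nonneg n _ hs.1.le (hs.2.trans h1))
        _ = ENNReal.ofReal (∫ s in (0:ℝ)..t, zz n (!false) s) := by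
            rw [intervalIntegral.integral_of_le h0]
        _ = ENNReal.ofReal (zz (n+1) false t) := by rw [zz_succ_false]; norm_num
    · -- b = true
      have hslice : ∀ s : ℝ, Prod.mk s ⁻¹' S =
          if s ∈ Set.Ioc t 1 then Reg n (!true) s else ∅ := by
        intro s
        by_cases hs : s ∈ Set.Ioc t 1
        · rw [if_pos hs]; ext y
          simp only [hS, Set.mem_preimage, Set.mem_setOf_eq, if_true]
          exact ⟨fun h => h.2.2, fun h => ⟨⟨h0.trans hs.1.le, hs.2⟩, hs.1, h⟩⟩
        · rw [if_neg hs]; ext y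
          simp only [hS, Set.mem_preimage, Set.mem_setOf_eq, if_true,
            Set.mem_empty_iff_false, iff_false]
          rintro ⟨hIcc, hlt, -⟩
          exact hs ⟨hlt, hIcc.2⟩
      calc (∫⁻ s, volume (Prod.mk s ⁻¹' S))
          = ∫⁻ s, (Set.Ioc t 1).indicator (fun s => volume (Reg n (!true) s)) s := by
            refine lintegral_congr fun s => ?_
            rw [hslice s, Set.indicator_apply]
            split_ifs with h
            · rfl
            · exact measure_empty
        _ = ∫⁻ s in Set.Ioc t 1, volume (Reg n (!true) s) :=
            lintegral_indicator measurableSet_Ioc _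
        _ = ∫⁻ s in Set.Ioc t 1, ENNReal.ofReal (zz n (!true) s) := by
            refine setLIntegral_congr_fun measurableSet_Ioc
              (fun s hs => ih _ (h0.trans hs.1.le) hs.2)
        _ = ENNReal.ofReal (∫ s in Set.Ioc t 1, zz n (!true) s) := by
            rw [← ofReal_integral_eq_lintegral_ofReal]
            · exact ((continuous_zz n (!true)).integrableOn_Icc).mono_set
                Set.Ioc_subset_Icc_self
            · exact (ae_restrict_iff' measurableSet_Ioc).2
                (Filter.Eventually.of_forall fun s hs => zz_nonneg n _ (h0.trans hs.1.le) hs.2)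
        _ = ENNReal.ofReal (∫ s in t..1, zz n (!true) s) := by
            rw [intervalIntegral.integral_of_le h1]
        _ = ENNReal.ofReal (zz (n+1) true t) := by rw [zz_succ_true]; norm_num

end

noncomputable section

def cube (n : ℕ) : Set (Fin n → ℝ) := Set.pi Set.univ fun _ => Set.Icc (0:ℝ) 1

def cell {n : ℕ} (σ : Equiv.Perm (Fin n)) : Set (Fin n → ℝ) :=
  cube n ∩ {x | StrictMono fun i => x (σ i)}

lemma measurableSet_cube (n : ℕ) : MeasurableSet (cube n) :=
  MeasurableSet.univ_pi fun _ => measurableSet_Icc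

lemma volume_cube (n : ℕ) : volume (cube n) = 1 := by
  rw [cube, volume_pi_pi]
  simp

lemma measurableSet_cell {n : ℕ} (σ : Equiv.Perm (Fin n)) : MeasurableSet (cell σ) := by
  refine (measurableSet_cube n).inter ?_
  have : {x : Fin n → ℝ | StrictMono fun i => x (σ i)} =
      ⋂ (p : Fin n × Fin n) (_ : p.1 < p.2), {x | x (σ p.1) < x (σ p.2)} := by
    ext x
    simp only [Set.mem_setOf_eq, Set.mem_iInter]
    exact ⟨fun h p hp => h hp, fun h a b hab => h (a, b) hab⟩
  rw [this]
  exact MeasurableSet.iInter fun p => MeasurableSet.iInter fun _ =>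
    measurableSet_lt (measurable_pi_apply _) (measurable_pi_apply _)

lemma volume_cell_eq {n : ℕ} (σ : Equiv.Perm (Fin n)) :
    volume (cell σ) = volume (cell (1 : Equiv.Perm (Fin n))) := by
  have hmp : MeasurePreserving
      (MeasurableEquiv.piCongrLeft (fun _ : Fin n => ℝ) σ.symm) volume volume :=
    volume_measurePreserving_piCongrLeft (fun _ : Fin n => ℝ) σ.symm
  have happ : ∀ x : Fin n → ℝ,
      (MeasurableEquiv.piCongrLeft (fun _ : Fin n => ℝ) σ.symm) x = fun i => x (σ i) := by
    intro x
    funext j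
    have h := MeasurableEquiv.piCongrLeft_apply_apply (σ.symm) (β := fun _ => ℝ) x (σ j)
    simpa using h
  have hpre : cell σ =
      (MeasurableEquiv.piCongrLeft (fun _ : Fin n => ℝ) σ.symm) ⁻¹'
        (cell (1 : Equiv.Perm (Fin n))) := by
    ext x
    simp only [cell, Set.mem_preimage, Set.mem_inter_iff, happ x]
    constructor
    · rintro ⟨hc, hm⟩
      refine ⟨fun i _ => hc (σ i) trivial, by simpa using hm⟩
    · rintro ⟨hc, hm⟩
      refine ⟨fun i _ => by simpa using hc (σ.symm i) trivial, by simpa using hm⟩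
  rw [hpre, hmp.measure_preimage (measurableSet_cell 1).nullMeasurableSet]

lemma cell_disjoint {n : ℕ} : Pairwise (Function.onFun Disjoint (cell (n := n))) := by
  intro σ τ hne
  rw [Function.onFun, Set.disjoint_left]
  rintro x ⟨-, hσ⟩ ⟨-, hτ⟩
  apply hne
  simp only [Set.mem_setOf_eq] at hσ hτ
  have hσ' : ∀ a b : Fin n, a < b ↔ x (σ a) < x (σ b) := fun a b =>
    (hσ.lt_iff_lt (a := a) (b := b)).symm
  have hτ' : ∀ a b : Fin n, a < b ↔ x (τ a) < x (τ b) := fun a b =>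
    (hτ.lt_iff_lt (a := a) (b := b)).symm
  -- ρ = σ⁻¹ ∘ τ is strict mono with strict mono inverse, hence identity
  set ρ : Equiv.Perm (Fin n) := τ.trans σ.symm with hρ
  have hfg : ∀ i, x (σ (ρ i)) = x (τ i) := fun i => by simp [hρ]
  have hρm : StrictMono ρ := fun a b hab => by
    have h := (hτ' a b).mp hab
    rw [← hfg a, ← hfg b] at h
    exact (hσ' (ρ a) (ρ b)).mpr h
  have hρsm : StrictMono ρ.symm := fun a b hab => by
    have h2 : ∀ i, x (τ (ρ.symm i)) = x (σ i) := fun i => by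
      have := hfg (ρ.symm i); rw [Equiv.apply_symm_apply] at this; exact this.symm
    have h := (hσ' a b).mp hab
    rw [← h2 a, ← h2 b] at h
    exact (hτ' (ρ.symm a) (ρ.symm b)).mpr h
  haveI : WellFoundedLT (Fin n) := Finite.to_wellFoundedLT
  have hid : ∀ i, ρ i = i := by
    intro i
    have h1 : i ≤ ρ i := hρm.le_apply (x := i)
    have h2 : ρ i ≤ ρ.symm (ρ i) := hρsm.le_apply (x := ρ i)
    rw [Equiv.symm_apply_apply] at h2
    exact le_antisymm h2 h1
  have : ρ = 1 := Equiv.ext hid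
  have hts : τ = σ := by
    apply Equiv.ext
    intro i
    have := congrArg (fun e : Equiv.Perm (Fin n) => σ (e i)) this
    simpa [hρ] using this
  exact hts.symm

lemma cube_subset_cells_union {n : ℕ} {x : Fin n → ℝ} (hx : x ∈ cube n)
    (hinj : Function.Injective x) : ∃ σ : Equiv.Perm (Fin n), x ∈ cell σ := by
  refine ⟨Tuple.sort x, hx, ?_⟩
  exact (Tuple.monotone_sort x).strictMono_of_injective (hinj.comp (Tuple.sort x).injective)

end
noncomputable section

lemma volume_pair_eq (n : ℕ) (i j : Fin n) (hij : i ≠ j) :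
    volume {x : Fin n → ℝ | x i = x j} = 0 := by
  cases n with
  | zero => exact i.elim0
  | succ m =>
    obtain ⟨k, hk⟩ := Fin.exists_succAbove_eq (Ne.symm hij)
    set e := MeasurableEquiv.piFinSuccAbove (fun _ : Fin (m+1) => ℝ) i with he
    have hmp : MeasurePreserving e volume volume :=
      volume_preserving_piFinSuccAbove (fun _ : Fin (m+1) => ℝ) i
    set T : Set (ℝ × (Fin m → ℝ)) := {p | p.1 = p.2 k} with hT
    have hTm : MeasurableSet T :=
      measurableSet_eq_fun measurable_fst (measurable_snd.eval)
    have hpre : {x : Fin (m+1) → ℝ | x i = x j} = e ⁻¹' T := by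
      ext x
      simp only [Set.mem_setOf_eq, Set.mem_preimage, hT, he,
        MeasurableEquiv.piFinSuccAbove_apply, Fin.insertNthEquiv_symm_apply, Fin.removeNth]
      rw [hk]
    rw [hpre, hmp.measure_preimage hTm.nullMeasurableSet]
    rw [show (volume : Measure (ℝ × (Fin m → ℝ))) = (volume : Measure ℝ).prod volume from rfl]
    rw [Measure.prod_apply hTm]
    have : ∀ s : ℝ, volume (Prod.mk s ⁻¹' T) = 0 := by
      intro s
      have : Prod.mk s ⁻¹' T = {y : Fin m → ℝ | y k = s} := by
        ext y; simp [hT, eq_comm]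
      rw [this, volume_pi]
      exact MeasureTheory.Measure.pi_hyperplane (fun _ : Fin m => (volume : Measure ℝ)) k s
    simp [this]

lemma volume_noninj (n : ℕ) :
    volume {x : Fin n → ℝ | ¬ Function.Injective x} = 0 := by
  have hsub : {x : Fin n → ℝ | ¬ Function.Injective x} ⊆
      ⋃ (p : Fin n × Fin n) (_ : p.1 ≠ p.2), {x | x p.1 = x p.2} := by
    intro x hx
    simp only [Set.mem_setOf_eq, Function.Injective, not_forall] at hx
    obtain ⟨a, b, hab, hne⟩ := hx
    exact Set.mem_iUnion.2 ⟨(a, b), Set.mem_iUnion.2 ⟨hne, hab⟩⟩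
  refine measure_mono_null hsub (measure_iUnion_null fun p => measure_iUnion_null fun hp =>
    volume_pair_eq n p.1 p.2 hp)

lemma volume_cell_one (n : ℕ) :
    volume (cell (1 : Equiv.Perm (Fin n))) = ((n.factorial : ℝ≥0∞))⁻¹ := by
  have hU : volume (⋃ σ : Equiv.Perm (Fin n), cell σ) =
      (n.factorial : ℝ≥0∞) * volume (cell (1 : Equiv.Perm (Fin n))) := by
    rw [measure_iUnion cell_disjoint (fun σ => measurableSet_cell σ)]
    rw [tsum_congr (fun σ => volume_cell_eq σ), tsum_fintype, Finset.sum_const,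
      Finset.card_univ, Fintype.card_perm, Fintype.card_fin, nsmul_eq_mul]
  have hle : volume (⋃ σ : Equiv.Perm (Fin n), cell σ) ≤ 1 := by
    rw [← volume_cube n]
    exact measure_mono (Set.iUnion_subset fun σ => Set.inter_subset_left)
  have hge : (1 : ℝ≥0∞) ≤ volume (⋃ σ : Equiv.Perm (Fin n), cell σ) := by
    rw [← volume_cube n]
    calc volume (cube n)
        ≤ volume ((⋃ σ : Equiv.Perm (Fin n), cell σ) ∪
            {x : Fin n → ℝ | ¬ Function.Injective x}) := by
          refine measure_mono fun x hx => ?_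
          by_cases hinj : Function.Injective x
          · obtain ⟨σ, hσ⟩ := cube_subset_cells_union hx hinj
            exact Or.inl (Set.mem_iUnion.2 ⟨σ, hσ⟩)
          · exact Or.inr hinj
      _ ≤ volume (⋃ σ : Equiv.Perm (Fin n), cell σ) +
            volume {x : Fin n → ℝ | ¬ Function.Injective x} := measure_union_le _ _
      _ = volume (⋃ σ : Equiv.Perm (Fin n), cell σ) := by rw [volume_noninj n, add_zero]
  have hone : (n.factorial : ℝ≥0∞) * volume (cell (1 : Equiv.Perm (Fin n))) = 1 := by
    rw [← hU]; exact le_antisymm hle hge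
  have hne : (n.factorial : ℝ≥0∞) ≠ 0 := Nat.cast_ne_zero.2 n.factorial_ne_zero
  have hnt : (n.factorial : ℝ≥0∞) ≠ ⊤ := ENNReal.natCast_ne_top _
  calc volume (cell (1 : Equiv.Perm (Fin n)))
      = ((n.factorial : ℝ≥0∞))⁻¹ * ((n.factorial : ℝ≥0∞) *
          volume (cell (1 : Equiv.Perm (Fin n)))) := by
        rw [← mul_assoc, ENNReal.inv_mul_cancel hne hnt, one_mul]
    _ = ((n.factorial : ℝ≥0∞))⁻¹ := by rw [hone, mul_one]

end

noncomputable section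

def crel (c : Bool) (a b : ℝ) : Prop := if c then b < a else a < b

def chainB (b : Bool) (n : ℕ) (x : Fin n → ℝ) : Prop :=
  ∀ i : ℕ, ∀ h : i + 1 < n,
    crel ((decide (i % 2 = 0)) == b) (x ⟨i, Nat.lt_of_succ_lt h⟩) (x ⟨i + 1, h⟩)

lemma mem_Reg_iff (n : ℕ) : ∀ (b : Bool) (t : ℝ) (x : Fin n → ℝ),
    x ∈ Reg n b t ↔ ((∀ i, x i ∈ Set.Icc (0:ℝ) 1) ∧
      (∀ h : 0 < n, crel (!b) t (x ⟨0, h⟩)) ∧ chainB b n x) := by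
  induction n with
  | zero =>
    intro b t x
    simp only [Reg, Set.mem_univ, true_iff]
    exact ⟨fun i => i.elim0, fun h => absurd h (lt_irrefl 0),
      fun i hi => absurd hi (by omega)⟩
  | succ n ih =>
    intro b t x
    have hmod : ∀ j : ℕ, ((decide ((j+1) % 2 = 0)) == b) = ((decide (j % 2 = 0)) == !b) := by
      intro j
      rcases Nat.mod_two_eq_zero_or_one j with h | h <;>
        cases b <;> simp [Nat.add_mod, h]
    constructor
    · rintro ⟨h1, h2, h3⟩
      rw [ih (!b) (x 0) _] at h3
      obtain ⟨h3, h4, h5⟩ := h3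
      refine ⟨Fin.cases h1 h3, fun _ => ?_, ?_⟩
      · show crel (!b) t (x 0)
        cases b <;> simpa [crel] using h2
      · intro i hi
        match i, hi with
        | 0, hi =>
          have h0n : 0 < n := by omega
          have hh := h4 h0n
          show crel ((decide (0 % 2 = 0)) == b) (x 0) (x ⟨1, hi⟩)
          have : ((decide (0 % 2 = 0)) == b) = b := by cases b <;> simp
          rw [this]
          cases b <;> simpa [crel] using hh
        | (j+1), hi =>
          have hj : j + 1 < n := by omega
          have hh := h5 j hj
          rw [hmod j]
          exact hh
    · rintro ⟨h1, h2, h3⟩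
      have h0 : (0 : Fin (n+1)) = ⟨0, Nat.succ_pos n⟩ := rfl
      refine ⟨h1 0, ?_, ?_⟩
      · have := h2 (Nat.succ_pos n)
        cases b <;> simpa [crel] using this
      · rw [ih (!b) (x 0) _]
        refine ⟨fun j => h1 j.succ, fun h => ?_, fun j hj => ?_⟩
        · have hh := h3 0 (by omega)
          have : ((decide (0 % 2 = 0)) == b) = b := by cases b <;> simp
          rw [this] at hh
          show crel (!(!b)) (x 0) (x (Fin.succ ⟨0, h⟩))
          cases b <;> simpa [crel] using hh
        · have hh := h3 (j+1) (by omega)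
          rw [hmod j] at hh
          exact hh

end
/-- `zigzag n` is the `n`-th Euler (zigzag) number: the number of alternating permutations
`σ` of `{1,…,n}` (modeled as `Fin n`, zero-based) with `σ(1) < σ(2) > σ(3) < σ(4) > ⋯`. -/
noncomputable def zigzag (n : ℕ) : ℕ :=
  Nat.card {σ : Equiv.Perm (Fin n) //
    ∀ i : ℕ, ∀ h : i + 1 < n,
      if i % 2 = 0 then σ ⟨i, Nat.lt_of_succ_lt h⟩ < σ ⟨i + 1, h⟩
      else σ ⟨i + 1, h⟩ < σ ⟨i, Nat.lt_of_succ_lt h⟩}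

noncomputable section

def UDp (n : ℕ) (σ : Equiv.Perm (Fin n)) : Prop :=
  ∀ i : ℕ, ∀ h : i + 1 < n,
    if i % 2 = 0 then σ ⟨i, Nat.lt_of_succ_lt h⟩ < σ ⟨i + 1, h⟩
    else σ ⟨i + 1, h⟩ < σ ⟨i, Nat.lt_of_succ_lt h⟩

def DUp (n : ℕ) (σ : Equiv.Perm (Fin n)) : Prop :=
  ∀ i : ℕ, ∀ h : i + 1 < n,
    if i % 2 = 0 then σ ⟨i + 1, h⟩ < σ ⟨i, Nat.lt_of_succ_lt h⟩
    else σ ⟨i, Nat.lt_of_succ_lt h⟩ < σ ⟨i + 1, h⟩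

lemma zigzag_eq_card (n : ℕ) : zigzag n = Nat.card {σ : Equiv.Perm (Fin n) // UDp n σ} := rfl

lemma card_DUp_eq (n : ℕ) :
    Nat.card {σ : Equiv.Perm (Fin n) // DUp n σ} = zigzag n := by
  rw [zigzag_eq_card]
  refine Nat.card_congr (Equiv.subtypeEquiv (Equiv.mulLeft (Fin.revPerm : Equiv.Perm (Fin n)))
    fun σ => ?_)
  constructor
  · intro hσ i h
    have := hσ i h
    split at this <;> rename_i hpar <;> simp only [hpar, if_pos, if_neg] <;>
      simp only [Equiv.coe_mulLeft, Equiv.Perm.mul_apply] <;>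
      simpa [Fin.rev_lt_rev] using this
  · intro hσ i h
    have := hσ i h
    simp only [Equiv.coe_mulLeft, Equiv.Perm.mul_apply] at this
    split at this <;> rename_i hpar <;> simp only [hpar, if_pos, if_neg] <;>
      simpa [Fin.rev_lt_rev] using this

lemma card_DUp_symm_eq (n : ℕ) :
    Nat.card {σ : Equiv.Perm (Fin n) // DUp n σ.symm} =
      Nat.card {σ : Equiv.Perm (Fin n) // DUp n σ} :=
  Nat.card_congr (Equiv.subtypeEquiv (Equiv.inv (Equiv.Perm (Fin n))) fun σ => Iff.rfl)

lemma chainB_cell_iff {n : ℕ} {σ : Equiv.Perm (Fin n)} {x : Fin n → ℝ}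
    (hm : StrictMono fun i => x (σ i)) : chainB true n x ↔ DUp n σ.symm := by
  have hx : ∀ a : Fin n, x a = (fun i => x (σ i)) (σ.symm a) := fun a => by simp
  refine forall₂_congr fun i hi => ?_
  by_cases hpar : i % 2 = 0
  · have hd : (decide (i % 2 = 0)) = true := decide_eq_true hpar
    simp only [crel, DUp, hpar, hd, Bool.true_beq, if_true]
    rw [hx ⟨i, Nat.lt_of_succ_lt hi⟩, hx ⟨i+1, hi⟩]
    exact hm.lt_iff_lt
  · have hd : (decide (i % 2 = 0)) = false := decide_eq_false hpar
    simp only [crel, DUp, hpar, hd, Bool.false_beq, if_false]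
    rw [hx ⟨i, Nat.lt_of_succ_lt hi⟩, hx ⟨i+1, hi⟩]
    exact hm.lt_iff_lt

lemma measurableSet_chainB (b : Bool) (n : ℕ) : MeasurableSet {x : Fin n → ℝ | chainB b n x} := by
  have : {x : Fin n → ℝ | chainB b n x} =
      ⋂ (i : ℕ) (h : i + 1 < n),
        {x | crel ((decide (i % 2 = 0)) == b) (x ⟨i, Nat.lt_of_succ_lt h⟩) (x ⟨i + 1, h⟩)} := by
    ext x
    simp only [Set.mem_setOf_eq, Set.mem_iInter, chainB]
  rw [this]
  refine MeasurableSet.iInter fun i => MeasurableSet.iInter fun hi => ?_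
  unfold crel
  split
  · exact measurableSet_lt (measurable_pi_apply _) (measurable_pi_apply _)
  · exact measurableSet_lt (measurable_pi_apply _) (measurable_pi_apply _)

lemma volume_chain_region (n : ℕ) :
    volume (cube n ∩ {x | chainB true n x}) =
      (Nat.card {σ : Equiv.Perm (Fin n) // DUp n σ.symm}) * ((n.factorial : ℝ≥0∞))⁻¹ := by
  classical
  set A := cube n ∩ {x | chainB true n x} with hA
  set U := ⋃ (s : {σ : Equiv.Perm (Fin n) // DUp n σ.symm}), cell s.val with hU
  have hUA : U ⊆ A := by
    rintro x hx
    obtain ⟨s, hs⟩ := Set.mem_iUnion.1 hx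
    obtain ⟨hc, hm⟩ := hs
    exact ⟨hc, (chainB_cell_iff hm).2 s.property⟩
  have hAU : A \ U ⊆ {x : Fin n → ℝ | ¬ Function.Injective x} := by
    rintro x ⟨⟨hc, hch⟩, hnu⟩
    by_contra hinj
    simp only [Set.mem_setOf_eq, not_not] at hinj
    obtain ⟨σ, hcell⟩ := cube_subset_cells_union hc hinj
    have hm := hcell.2
    exact hnu (Set.mem_iUnion.2 ⟨⟨σ, (chainB_cell_iff hm).1 hch⟩, hcell⟩)
  have hvol : volume A = volume U := by
    refine le_antisymm ?_ (measure_mono hUA)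
    calc volume A ≤ volume (U ∪ {x : Fin n → ℝ | ¬ Function.Injective x}) := by
          refine measure_mono fun x hx => ?_
          by_cases hu : x ∈ U
          · exact Or.inl hu
          · exact Or.inr (hAU ⟨hx, hu⟩)
      _ ≤ volume U + volume {x : Fin n → ℝ | ¬ Function.Injective x} := measure_union_le _ _
      _ = volume U := by rw [volume_noninj n, add_zero]
  rw [hvol, hU]
  have hdisj : Pairwise (Function.onFun Disjoint
      fun s : {σ : Equiv.Perm (Fin n) // DUp n σ.symm} => cell s.val) :=
    fun s t hst => cell_disjoint fun h => hst (Subtype.ext h)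
  rw [measure_iUnion hdisj (fun s => measurableSet_cell _)]
  have : ∀ s : {σ : Equiv.Perm (Fin n) // DUp n σ.symm},
      volume (cell s.val) = ((n.factorial : ℝ≥0∞))⁻¹ := fun s => by
    rw [volume_cell_eq, volume_cell_one]
  rw [tsum_congr this, tsum_fintype, Finset.sum_const, Finset.card_univ, nsmul_eq_mul,
    Nat.card_eq_fintype_card]

end
noncomputable section

lemma volume_Reg_eq_chain_region (n : ℕ) :
    volume (Reg (n+1) true 0) = volume (cube (n+1) ∩ {x | chainB true (n+1) x}) := by
  set A := cube (n+1) ∩ {x | chainB true (n+1) x} with hA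
  have hRA : Reg (n+1) true 0 ⊆ A := by
    intro x hx
    obtain ⟨h1, h2, h3⟩ := (mem_Reg_iff (n+1) true 0 x).1 hx
    exact ⟨Set.mem_univ_pi.2 h1, h3⟩
  have hAR : A \ Reg (n+1) true 0 ⊆ {x : Fin (n+1) → ℝ | x 0 = 0} := by
    rintro x ⟨⟨hc, hch⟩, hnr⟩
    by_contra hne
    simp only [Set.mem_setOf_eq] at hne
    refine hnr ((mem_Reg_iff (n+1) true 0 x).2 ⟨Set.mem_univ_pi.1 hc, fun h => ?_, hch⟩)
    have h0 : x 0 ∈ Set.Icc (0:ℝ) 1 := Set.mem_univ_pi.1 hc 0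
    show crel false 0 (x 0)
    exact lt_of_le_of_ne h0.1 (Ne.symm hne)
  have hnull : volume {x : Fin (n+1) → ℝ | x 0 = 0} = 0 := by
    rw [volume_pi]
    exact MeasureTheory.Measure.pi_hyperplane (fun _ : Fin (n+1) => (volume : Measure ℝ)) 0 0
  refine le_antisymm (measure_mono hRA) ?_
  calc volume A ≤ volume (Reg (n+1) true 0 ∪ {x : Fin (n+1) → ℝ | x 0 = 0}) := by
        refine measure_mono fun x hx => ?_
        by_cases hr : x ∈ Reg (n+1) true 0
        · exact Or.inl hr
        · exact Or.inr (hAR ⟨hx, hr⟩)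
    _ ≤ volume (Reg (n+1) true 0) + volume {x : Fin (n+1) → ℝ | x 0 = 0} := measure_union_le _ _
    _ = volume (Reg (n+1) true 0) := by rw [hnull, add_zero]

lemma ratio_eq (n : ℕ) :
    (zigzag (n+1) : ℝ) / ((n+1).factorial : ℝ) = zz (n+1) true 0 := by
  have h1 : volume (Reg (n+1) true 0) = ENNReal.ofReal (zz (n+1) true 0) :=
    volume_Reg (n+1) true le_rfl zero_le_one
  have h2 : volume (Reg (n+1) true 0) =
      (zigzag (n+1) : ℝ≥0∞) * (((n+1).factorial : ℝ≥0∞))⁻¹ := by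
    rw [volume_Reg_eq_chain_region, volume_chain_region, card_DUp_symm_eq, card_DUp_eq]
  have h3 := congrArg ENNReal.toReal (h2.symm.trans h1)
  rw [ENNReal.toReal_ofReal (zz_nonneg (n+1) true le_rfl zero_le_one)] at h3
  rw [ENNReal.toReal_mul, ENNReal.toReal_inv] at h3
  rw [← h3]
  simp [div_eq_mul_inv]

lemma main_bounds (n : ℕ) :
    (2/π)^(n+1) ≤ (zigzag (n+1) : ℝ) / ((n+1).factorial : ℝ) ∧
      (zigzag (n+1) : ℝ) / ((n+1).factorial : ℝ) ≤ (2/π)^n := by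
  rw [ratio_eq]
  exact zz_zero_bounds n

end
theorem stmt18 :
    Tendsto (fun n : ℕ => ((zigzag n : ℝ) / (Nat.factorial n : ℝ)) ^ (1 / (n : ℝ)))
      atTop (nhds (2 / Real.pi)) := by
  have hπ : (0:ℝ) < π := Real.pi_pos
  have hκ : (0:ℝ) < 2 / π := by positivity
  -- upper comparison sequence
  have hupper : Tendsto (fun n : ℕ => (π/2) ^ (1/(n:ℝ)) * (2/π)) atTop (nhds (2/π)) := by
    have h1 : Tendsto (fun n : ℕ => (π/2) ^ (1/(n:ℝ))) atTop (nhds 1) := by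
      have hc : ContinuousAt (fun x : ℝ => (π/2) ^ x) 0 :=
        Real.continuousAt_const_rpow (by positivity)
      have := hc.tendsto.comp tendsto_one_div_atTop_nhds_zero_nat
      simpa [Real.rpow_zero, Function.comp_def] using this
    have := h1.mul_const (2/π)
    simpa using this
  refine tendsto_of_tendsto_of_tendsto_of_le_of_le' tendsto_const_nhds hupper ?_ ?_
  · -- lower bound, eventually
    filter_upwards [eventually_ge_atTop 1] with n hn
    match n, hn with
    | (m+1), _ =>
      have hb := (main_bounds m).1
      have hNpos : (0:ℝ) < ((m+1 : ℕ) : ℝ) := by positivity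
      have hcollapse : ((2/π) ^ (m+1) : ℝ) ^ (1 / ((m+1 : ℕ) : ℝ)) = 2/π := by
        rw [← Real.rpow_natCast (2/π) (m+1), ← Real.rpow_mul hκ.le]
        rw [mul_one_div, div_self hNpos.ne', Real.rpow_one]
      calc (2:ℝ)/π = ((2/π) ^ (m+1)) ^ (1 / ((m+1 : ℕ) : ℝ)) := hcollapse.symm
        _ ≤ ((zigzag (m+1) : ℝ) / ((m+1).factorial : ℝ)) ^ (1 / ((m+1 : ℕ) : ℝ)) :=
            Real.rpow_le_rpow (by positivity) hb (by positivity)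
  · -- upper bound, eventually
    filter_upwards [eventually_ge_atTop 1] with n hn
    match n, hn with
    | (m+1), _ =>
      have hb := (main_bounds m).2
      have hNpos : (0:ℝ) < ((m+1 : ℕ) : ℝ) := by positivity
      have hsplit : ((2:ℝ)/π) ^ m = (π/2) * (2/π) ^ (m+1) := by
        have : (π/2) * (2/π) = 1 := by field_simp
        calc ((2:ℝ)/π) ^ m = ((π/2) * (2/π)) * (2/π)^m := by rw [this, one_mul]
          _ = (π/2) * (2/π) ^ (m+1) := by ring
      have hcollapse : ((2/π) ^ (m+1) : ℝ) ^ (1 / ((m+1 : ℕ) : ℝ)) = 2/π := by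
        rw [← Real.rpow_natCast (2/π) (m+1), ← Real.rpow_mul hκ.le]
        rw [mul_one_div, div_self hNpos.ne', Real.rpow_one]
      calc ((zigzag (m+1) : ℝ) / ((m+1).factorial : ℝ)) ^ (1 / ((m+1 : ℕ) : ℝ))
          ≤ ((π/2) * (2/π) ^ (m+1)) ^ (1 / ((m+1 : ℕ) : ℝ)) := by
            refine Real.rpow_le_rpow ?_ (hb.trans_eq hsplit) (by positivity)
            have := (main_bounds m).1
            positivity
        _ = (π/2) ^ (1 / ((m+1 : ℕ) : ℝ)) * ((2/π) ^ (m+1)) ^ (1 / ((m+1 : ℕ) : ℝ)) :=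
            Real.mul_rpow (by positivity) (by positivity)
        _ = (π/2) ^ (1 / ((m+1 : ℕ) : ℝ)) * (2/π) := by rw [hcollapse]
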